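/- arXiv:0907.3991 — 2 statements merged into one kernel-verified Lean document; each statement's English description precedes it below -/
import Mathlib

section
/- Let H = (H_1,...,H_n) be an n-tuple of polynomials in K[z_1,...,z_n] and set P(ξ,z) = ⟨ξ,H⟩ = Σ_{i=1}^n ξ_i H_i(z) ∈ K[ξ,z]. If there exists an integer M such that Λ^m(P^m) = 0 for all m ≥ M, then in fact Λ^m(P^m) = 0 for all m ≥ 1. (This establishes a special case of the conjecture that for any P ∈ K[ξ,z], the vanishing of Λ^m(P^m) for all large m implies its vanishing for all m ≥ 1.) -/
open MvPolynomial

/-- The Jacobian matrix `(∂H_i/∂z_j)` of an `n`-tuple of polynomials. -/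
noncomputable def jacMat {K : Type*} [CommRing K] {n : ℕ}
    (H : Fin n → MvPolynomial (Fin n) K) :
    Matrix (Fin n) (Fin n) (MvPolynomial (Fin n) K) :=
  Matrix.of fun i j => pderiv j (H i)

/-- The operator `Λ = Σ_i ∂_{ξ_i} ∂_{z_i}` on `K[ξ,z]`, where the `ξ`-variables are indexed
by `Sum.inl` and the `z`-variables by `Sum.inr`. -/
noncomputable def Lam (K : Type*) [CommRing K] (n : ℕ) :
    Module.End K (MvPolynomial (Fin n ⊕ Fin n) K) :=
  ∑ i : Fin n,
    ((pderiv (Sum.inl i)).toLinearMap ∘ₗ (pderiv (Sum.inr i)).toLinearMap)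

/-- `P = ⟨ξ, H⟩ = Σ_i ξ_i H_i(z) ∈ K[ξ,z]`. -/
noncomputable def PofH {K : Type*} [CommRing K] {n : ℕ}
    (H : Fin n → MvPolynomial (Fin n) K) : MvPolynomial (Fin n ⊕ Fin n) K :=
  ∑ i : Fin n, X (Sum.inl i) * rename Sum.inr (H i)

section LamSide

variable {K : Type*} [CommRing K] {n : ℕ}

lemma pderiv_comm' {σ : Type*} (i j : σ) (p : MvPolynomial σ K) :
    pderiv i (pderiv j p) = pderiv j (pderiv i p) := by
  classical
  induction p using MvPolynomial.induction_on with
  | C a => simp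
  | add p q hp hq => simp [hp, hq]
  | mul_X p k ih =>
    simp only [pderiv_mul, pderiv_X, map_add, pderiv_mul, ih, Pi.single_apply]
    split_ifs <;> simp [ih] <;> ring

variable (H : Fin n → MvPolynomial (Fin n) K)

/-- `Sop H m f = ∑_{j : (Fin n)^m} D_{j_1} ⋯ D_{j_m} (H_{j_1} ⋯ H_{j_m} f)`, defined
recursively. -/
noncomputable def Sop : ℕ → MvPolynomial (Fin n) K →ₗ[K] MvPolynomial (Fin n) K
  | 0 => LinearMap.id
  | (m+1) => ∑ i : Fin n,
      (pderiv i).toLinearMap ∘ₗ (Sop m) ∘ₗ (LinearMap.mulLeft K (H i))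

lemma Sop_succ (m : ℕ) (f : MvPolynomial (Fin n) K) :
    Sop H (m+1) f = ∑ i : Fin n, pderiv i (Sop H m (H i * f)) := by
  simp [Sop]

/-- The analogue of `Sop` on the big ring, acting through `z`-variables only. -/
noncomputable def Atil : ℕ → MvPolynomial (Fin n ⊕ Fin n) K →ₗ[K] MvPolynomial (Fin n ⊕ Fin n) K
  | 0 => LinearMap.id
  | (k+1) => ∑ i : Fin n,
      (pderiv (Sum.inr i)).toLinearMap ∘ₗ (Atil k) ∘ₗ
        (LinearMap.mulLeft K (rename Sum.inr (H i)))

lemma Atil_succ (k : ℕ) (u : MvPolynomial (Fin n ⊕ Fin n) K) :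
    Atil H (k+1) u = ∑ i : Fin n, pderiv (Sum.inr i) (Atil H k (rename Sum.inr (H i) * u)) := by
  simp [Atil]

lemma pderiv_inl_rename (i : Fin n) (g : MvPolynomial (Fin n) K) :
    pderiv (Sum.inl i : Fin n ⊕ Fin n) (rename Sum.inr g) = 0 := by
  apply pderiv_eq_zero_of_notMem_vars
  intro hmem
  have := vars_rename (R := K) Sum.inr g hmem
  simp at this

lemma pderiv_inl_Atil (i : Fin n) (k : ℕ) (u : MvPolynomial (Fin n ⊕ Fin n) K) :
    pderiv (Sum.inl i) (Atil H k u) = Atil H k (pderiv (Sum.inl i) u) := by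
  induction k generalizing u with
  | zero => simp [Atil]
  | succ k ih =>
    simp only [Atil_succ, map_sum]
    refine Finset.sum_congr rfl fun l _ => ?_
    rw [pderiv_comm', ih, pderiv_mul, pderiv_inl_rename, zero_mul, zero_add]

lemma pderiv_inl_PofH (i : Fin n) :
    pderiv (Sum.inl i) (PofH H) = rename Sum.inr (H i) := by
  classical
  simp only [PofH, map_sum, pderiv_mul, pderiv_inl_rename, mul_zero, add_zero, pderiv_X]
  rw [Finset.sum_eq_single i]
  · simp
  · intro b _ hb
    simp only [Pi.single_apply]
    rw [if_neg (by simpa using hb), zero_mul]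
  · simp

lemma Lam_Atil_pow (k r : ℕ) :
    Lam K n (Atil H k ((PofH H) ^ (r+1))) = (r+1) • Atil H (k+1) ((PofH H) ^ r) := by
  classical
  rw [Lam]
  simp only [LinearMap.sum_apply, LinearMap.comp_apply, Derivation.coeFn_coe]
  have step : ∀ i : Fin n,
      pderiv (Sum.inl i) (pderiv (Sum.inr i) (Atil H k ((PofH H) ^ (r+1))))
        = (r+1) • pderiv (Sum.inr i) (Atil H k (rename Sum.inr (H i) * (PofH H) ^ r)) := by
    intro i
    rw [pderiv_comm', pderiv_inl_Atil]
    have hpow : pderiv (Sum.inl i) ((PofH H) ^ (r+1))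
        = (r+1) • (rename Sum.inr (H i) * (PofH H) ^ r) := by
      rw [pderiv_pow, pderiv_inl_PofH, nsmul_eq_mul]
      push_cast
      ring
    rw [hpow, map_nsmul, map_nsmul]
  rw [Atil_succ, Finset.smul_sum]
  exact Finset.sum_congr rfl fun i _ => step i

lemma Lam_pow_PofH (m : ℕ) :
    (Lam K n ^ m) ((PofH H) ^ m) = m.factorial • Atil H m 1 := by
  have key : ∀ k, k ≤ m → (Lam K n ^ k) ((PofH H) ^ m)
      = (m.descFactorial k) • Atil H k ((PofH H) ^ (m - k)) := by
    intro k hk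
    induction k with
    | zero => simp [Atil]
    | succ k ih =>
      have hk' : k ≤ m := Nat.le_of_succ_le hk
      rw [pow_succ', Module.End.mul_apply, ih hk', map_nsmul]
      have hsub : m - k = (m - (k+1)) + 1 := by omega
      have h2 : m - (k+1) + 1 = m - k := by omega
      rw [hsub, Lam_Atil_pow, smul_smul, Nat.descFactorial_succ, h2, Nat.mul_comm]
  have := key m le_rfl
  rw [this, Nat.sub_self, pow_zero, Nat.descFactorial_self]

lemma Atil_rename (k : ℕ) (g : MvPolynomial (Fin n) K) :
    Atil H k (rename Sum.inr g) = rename Sum.inr (Sop H k g) := by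
  induction k generalizing g with
  | zero => simp [Atil, Sop]
  | succ k ih =>
    rw [Atil_succ, Sop_succ, map_sum]
    refine Finset.sum_congr rfl fun i _ => ?_
    rw [← map_mul, ih, pderiv_rename Sum.inr_injective]

lemma Lam_pow_PofH' (m : ℕ) :
    (Lam K n ^ m) ((PofH H) ^ m) = m.factorial • rename Sum.inr (Sop H m 1) := by
  rw [Lam_pow_PofH, show (1 : MvPolynomial (Fin n ⊕ Fin n) K) = rename Sum.inr 1 from (map_one _).symm, Atil_rename]

end LamSide

section PS

variable {K : Type*} [CommRing K] {n : ℕ}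

local notation "Rz" => MvPolynomial (Fin n) K
local notation "A" => PowerSeries (MvPolynomial (Fin n) K)

/-- Coefficientwise partial derivative on power series. -/
noncomputable def dzs (j : Fin n) (u : A) : A :=
  PowerSeries.mk fun N => pderiv j (PowerSeries.coeff (R := Rz) N u)

@[simp] lemma coeff_dzs (j : Fin n) (u : A) (N : ℕ) :
    PowerSeries.coeff (R := Rz) N (dzs j u) = pderiv j (PowerSeries.coeff (R := Rz) N u) := by
  simp [dzs]

lemma dzs_add (j : Fin n) (u v : A) : dzs j (u + v) = dzs j u + dzs j v := by
  ext N; simp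

lemma dzs_sub (j : Fin n) (u v : A) : dzs j (u - v) = dzs j u - dzs j v := by
  ext N; simp

lemma dzs_mul (j : Fin n) (u v : A) : dzs j (u * v) = dzs j u * v + u * dzs j v := by
  ext N
  simp only [coeff_dzs, PowerSeries.coeff_mul, map_sum, pderiv_mul, map_add]
  rw [Finset.sum_add_distrib]

@[simp] lemma dzs_C (j : Fin n) (r : Rz) :
    dzs j (PowerSeries.C (R := Rz) r) = PowerSeries.C (R := Rz) (pderiv j r) := by
  ext N
  simp only [coeff_dzs, PowerSeries.coeff_C]
  split_ifs <;> simp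

@[simp] lemma dzs_X (j : Fin n) : dzs j (PowerSeries.X : A) = 0 := by
  ext N
  simp only [coeff_dzs, PowerSeries.coeff_X]
  split_ifs <;> simp

variable (H : Fin n → MvPolynomial (Fin n) K)

/-- The family `F_i = z_i - t H_i(z)` as power series in `t`. -/
noncomputable def Ffam (i : Fin n) : A :=
  PowerSeries.C (R := Rz) (X i) - PowerSeries.X * PowerSeries.C (R := Rz) (H i)

/-- Substitution `z_i ↦ F_i` as a ring homomorphism `K[z] →+* K[z]⟦t⟧`. -/
noncomputable def sig : MvPolynomial (Fin n) K →+* A :=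
  eval₂Hom ((PowerSeries.C (R := Rz)).comp (MvPolynomial.C)) (Ffam H)

lemma sig_C (k : K) : sig H (MvPolynomial.C k) = PowerSeries.C (R := Rz) (MvPolynomial.C k) := by
  simp [sig]

lemma sig_X (i : Fin n) : sig H (X i) = Ffam H i := by
  simp [sig]

lemma sig_pderiv_X (l m : Fin n) :
    sig H (pderiv l (X m)) = PowerSeries.C (R := Rz) (pderiv l (X m)) := by
  classical
  rw [pderiv_X]
  rcases eq_or_ne m l with h | h
  · subst h; simp
  · simp [Pi.single_apply, if_neg (by simpa using h.symm)]

lemma sum_mul_pderiv_X (g : Fin n → Rz) (i : Fin n) :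
    ∑ k : Fin n, g k * pderiv k (X i) = g i := by
  classical
  rw [Finset.sum_eq_single i]
  · simp
  · intro b _ hb
    rw [pderiv_X]
    simp only [Pi.single_apply]
    rw [if_neg fun h => hb h.symm]
    simp
  · simp

/-- Key identity I1: derivative in `z_j` of a substituted polynomial. -/
lemma dzs_sig (j : Fin n) (a : Rz) :
    dzs j (sig H a) = sig H (pderiv j a)
      - PowerSeries.X * ∑ k : Fin n,
          PowerSeries.C (R := Rz) (pderiv j (H k)) * sig H (pderiv k a) := by
  classical
  induction a using MvPolynomial.induction_on with
  | C k => simp [sig_C]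
  | add p q hp hq =>
    simp only [map_add, dzs_add, hp, hq, mul_add, Finset.sum_add_distrib]
    ring
  | mul_X p i hp =>
    have hsX : sig H (p * X i) = sig H p * Ffam H i := by rw [map_mul, sig_X]
    have hdF : dzs j (Ffam H i) =
        PowerSeries.C (R := Rz) (pderiv j (X i)) - PowerSeries.X * PowerSeries.C (R := Rz) (pderiv j (H i)) := by
      rw [Ffam, dzs_sub, dzs_mul, dzs_C, dzs_C, dzs_X, zero_mul, zero_add]
    have hder : ∀ l : Fin n, pderiv l (p * X i) = pderiv l p * X i + p * pderiv l (X i) :=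
      fun l => pderiv_mul
    have hterm : ∀ l : Fin n, sig H (pderiv l (p * X i))
        = sig H (pderiv l p) * Ffam H i + PowerSeries.C (R := Rz) (pderiv l (X i)) * sig H p := by
      intro l
      rw [hder l, map_add, map_mul, sig_X, map_mul, sig_pderiv_X]
      ring
    have hsum : ∑ k : Fin n, PowerSeries.C (R := Rz) (pderiv j (H k)) * sig H (pderiv k (p * X i))
        = (∑ k : Fin n, PowerSeries.C (R := Rz) (pderiv j (H k)) * sig H (pderiv k p)) * Ffam H i
          + PowerSeries.C (R := Rz) (pderiv j (H i)) * sig H p := by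
      rw [Finset.sum_congr rfl fun k _ => by rw [hterm k, mul_add]]
      rw [Finset.sum_add_distrib]
      congr 1
      · rw [Finset.sum_mul]
        exact Finset.sum_congr rfl fun k _ => (mul_assoc _ _ _).symm
      · have : ∑ k : Fin n, PowerSeries.C (R := Rz) (pderiv j (H k)) *
            (PowerSeries.C (R := Rz) (pderiv k (X i)) * sig H p)
            = (∑ k : Fin n, PowerSeries.C (R := Rz) (pderiv j (H k) * pderiv k (X i))) * sig H p := by
          rw [Finset.sum_mul]
          exact Finset.sum_congr rfl fun k _ => by rw [map_mul]; ring
        rw [this, ← map_sum, sum_mul_pderiv_X]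
    rw [hsX, dzs_mul, hp, hdF, hterm j, hsum]
    ring

/-- Key identity I2: derivative in `t` of a substituted polynomial. -/
lemma dt_sig (a : Rz) :
    PowerSeries.derivative (R := Rz) (sig H a)
      = -∑ i : Fin n, PowerSeries.C (R := Rz) (H i) * sig H (pderiv i a) := by
  classical
  induction a using MvPolynomial.induction_on with
  | C k => simp [sig_C]
  | add p q hp hq =>
    simp only [map_add, hp, hq, mul_add, Finset.sum_add_distrib]
    ring
  | mul_X p i hp =>
    have hsX : sig H (p * X i) = sig H p * Ffam H i := by rw [map_mul, sig_X]
    have hdF : PowerSeries.derivative (R := Rz) (Ffam H i) = -PowerSeries.C (R := Rz) (H i) := by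
      simp only [Ffam, map_sub, PowerSeries.derivative_C]
      rw [Derivation.leibniz]
      simp
    have hterm : ∀ l : Fin n, sig H (pderiv l (p * X i))
        = sig H (pderiv l p) * Ffam H i + PowerSeries.C (R := Rz) (pderiv l (X i)) * sig H p := by
      intro l
      rw [pderiv_mul, map_add, map_mul, sig_X, map_mul, sig_pderiv_X]
      ring
    have hsum : ∑ l : Fin n, PowerSeries.C (R := Rz) (H l) * sig H (pderiv l (p * X i))
        = (∑ l : Fin n, PowerSeries.C (R := Rz) (H l) * sig H (pderiv l p)) * Ffam H i
          + PowerSeries.C (R := Rz) (H i) * sig H p := by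
      rw [Finset.sum_congr rfl fun l _ => by rw [hterm l, mul_add]]
      rw [Finset.sum_add_distrib]
      congr 1
      · rw [Finset.sum_mul]
        exact Finset.sum_congr rfl fun l _ => (mul_assoc _ _ _).symm
      · have : ∑ l : Fin n, PowerSeries.C (R := Rz) (H l) *
            (PowerSeries.C (R := Rz) (pderiv l (X i)) * sig H p)
            = (∑ l : Fin n, PowerSeries.C (R := Rz) (H l * pderiv l (X i))) * sig H p := by
          rw [Finset.sum_mul]
          exact Finset.sum_congr rfl fun l _ => by rw [map_mul]; ring
        rw [this, ← map_sum, sum_mul_pderiv_X]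
    rw [hsX]
    rw [Derivation.leibniz, smul_eq_mul, smul_eq_mul, hp, hdF, hsum]
    ring

end PS

section PSi

variable {K : Type*} [CommRing K] {n : ℕ}

local notation "Rz" => MvPolynomial (Fin n) K
local notation "A" => PowerSeries (MvPolynomial (Fin n) K)

noncomputable def dzs' (j : Fin n) (u : A) : A :=
  PowerSeries.mk fun N => pderiv j (PowerSeries.coeff (R := Rz) N u)

@[simp] lemma coeff_dzs' (j : Fin n) (u : A) (N : ℕ) :
    PowerSeries.coeff (R := Rz) N (dzs' j u) = pderiv j (PowerSeries.coeff (R := Rz) N u) := by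
  simp [dzs']

/-- `t`-derivative of a power series, in `ℕ`-smul form. -/
noncomputable def dts (u : A) : A :=
  PowerSeries.mk fun N => (N+1) • PowerSeries.coeff (R := Rz) (N+1) u

@[simp] lemma coeff_dts (u : A) (N : ℕ) :
    PowerSeries.coeff (R := Rz) N (dts u) = (N+1) • PowerSeries.coeff (R := Rz) (N+1) u := by
  simp [dts]

lemma dts_eq_derivative (u : A) : dts u = PowerSeries.derivative (R := Rz) u := by
  refine PowerSeries.ext fun N => ?_
  rw [coeff_dts, PowerSeries.coeff_derivative, nsmul_eq_mul, mul_comm]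
  norm_cast

lemma dts_mul (u v : A) : dts (u * v) = dts u * v + u * dts v := by
  rw [dts_eq_derivative, dts_eq_derivative, dts_eq_derivative, Derivation.leibniz,
    smul_eq_mul, smul_eq_mul]
  ring

@[simp] lemma dts_C (r : Rz) : dts (PowerSeries.C (R := Rz) r) = 0 := by
  rw [dts_eq_derivative, PowerSeries.derivative_C]

@[simp] lemma dts_X : dts (PowerSeries.X : A) = 1 := by
  rw [dts_eq_derivative, PowerSeries.derivative_X]

lemma dts_sub (u v : A) : dts (u - v) = dts u - dts v := by
  refine PowerSeries.ext fun N => ?_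
  simp [smul_sub]

lemma dts_sum {ι : Type*} (s : Finset ι) (f : ι → A) :
    dts (∑ i ∈ s, f i) = ∑ i ∈ s, dts (f i) := by
  refine PowerSeries.ext fun N => ?_
  simp only [coeff_dts, map_sum, Finset.smul_sum]

/-- `Psi c = ∑_m t^m c m` for a stream `c` of power series. -/
noncomputable def Psi (c : ℕ → A) : A :=
  PowerSeries.mk fun N => ∑ m ∈ Finset.range (N+1), PowerSeries.coeff (R := Rz) (N - m) (c m)

@[simp] lemma coeff_Psi (c : ℕ → A) (N : ℕ) :
    PowerSeries.coeff (R := Rz) N (Psi c) = ∑ m ∈ Finset.range (N+1),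
      PowerSeries.coeff (R := Rz) (N - m) (c m) := by
  simp [Psi]

lemma Psi_congr {c d : ℕ → A} (h : ∀ m, c m = d m) : Psi c = Psi d := by
  refine PowerSeries.ext fun N => ?_
  simp [h]

lemma Psi_sub (c d : ℕ → A) : Psi (fun m => c m - d m) = Psi c - Psi d := by
  refine PowerSeries.ext fun N => ?_
  simp [Finset.sum_sub_distrib]

lemma Psi_sum {ι : Type*} (s : Finset ι) (c : ι → ℕ → A) :
    Psi (fun m => ∑ i ∈ s, c i m) = ∑ i ∈ s, Psi (c i) := by
  refine PowerSeries.ext fun N => ?_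
  simp only [coeff_Psi, map_sum, coeff_Psi]
  exact Finset.sum_comm

lemma Psi_dzs (j : Fin n) (c : ℕ → A) :
    dzs' j (Psi c) = Psi (fun m => dzs' j (c m)) := by
  refine PowerSeries.ext fun N => ?_
  simp [map_sum]

lemma Psi_C_mul (g : Rz) (c : ℕ → A) :
    Psi (fun m => PowerSeries.C (R := Rz) g * c m) = PowerSeries.C (R := Rz) g * Psi c := by
  refine PowerSeries.ext fun N => ?_
  simp [PowerSeries.coeff_C_mul, Finset.mul_sum]

private lemma coeff_X_mul'' (v : A) (N : ℕ) :
    PowerSeries.coeff (R := Rz) N (PowerSeries.X * v)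
      = if 1 ≤ N then PowerSeries.coeff (R := Rz) (N - 1) v else 0 := by
  rw [← pow_one (PowerSeries.X : A), PowerSeries.coeff_X_pow_mul']

lemma Psi_X_mul (c : ℕ → A) :
    Psi (fun m => PowerSeries.X * c m) = PowerSeries.X * Psi c := by
  refine PowerSeries.ext fun N => ?_
  rw [coeff_Psi, coeff_X_mul'']
  cases N with
  | zero =>
    rw [Finset.sum_range_one, coeff_X_mul'', if_neg (by omega), if_neg (by omega)]
  | succ s =>
    rw [if_pos (by omega)]
    have hL : ∑ m ∈ Finset.range (s+1+1), PowerSeries.coeff (R := Rz) (s+1-m) (PowerSeries.X * c m)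
        = ∑ m ∈ Finset.range (s+1+1),
            (if 1 ≤ s+1-m then PowerSeries.coeff (R := Rz) (s+1-m-1) (c m) else 0) :=
      Finset.sum_congr rfl fun m _ => coeff_X_mul'' (c m) (s+1-m)
    rw [hL, Finset.sum_range_succ, if_neg (by omega), add_zero,
      show s + 1 - 1 = s from rfl, coeff_Psi]
    refine Finset.sum_congr rfl fun m hm => ?_
    have hm' : m ≤ s := by simpa [Nat.lt_succ_iff] using hm
    have h2 : s + 1 - m - 1 = s - m := by omega
    rw [if_pos (by omega), h2]

lemma Psi_dts (c : ℕ → A) :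
    dts (Psi c) = Psi (fun m => (m+1) • c (m+1)) + Psi (fun m => dts (c m)) := by
  refine PowerSeries.ext fun N => ?_
  rw [coeff_dts, map_add, coeff_Psi, coeff_Psi, coeff_Psi, Finset.smul_sum]
  have hsplit : ∀ m ∈ Finset.range (N+1+1),
      (N+1) • PowerSeries.coeff (R := Rz) (N+1-m) (c m)
        = m • PowerSeries.coeff (R := Rz) (N+1-m) (c m)
          + (N+1-m) • PowerSeries.coeff (R := Rz) (N+1-m) (c m) := by
    intro m hm
    rw [← add_nsmul]
    have : m + (N+1-m) = N+1 := by
      have := Finset.mem_range.mp hm; omega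
    rw [this]
  rw [Finset.sum_congr rfl hsplit, Finset.sum_add_distrib]
  congr 1
  · rw [Finset.sum_range_succ']
    simp only [zero_smul, add_zero]
    refine Finset.sum_congr rfl fun m hm => ?_
    have h1 : N + 1 - (m+1) = N - m := by omega
    rw [h1, map_nsmul]
  · rw [Finset.sum_range_succ]
    simp only [Nat.sub_self, zero_smul, add_zero]
    refine Finset.sum_congr rfl fun m hm => ?_
    have hm' : m ≤ N := by simpa [Nat.lt_succ_iff] using hm
    rw [coeff_dts]
    have h1 : N + 1 - m = N - m + 1 := by omega
    rw [h1]

lemma Psi_poly (M : ℕ) (c : ℕ → A) (hM : ∀ m, M ≤ m → c m = 0) :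
    Psi c = ∑ m ∈ Finset.range M, PowerSeries.X ^ m * c m := by
  refine PowerSeries.ext fun N => ?_
  rw [coeff_Psi, map_sum]
  have hL1 : ∑ m ∈ Finset.range (N+1), PowerSeries.coeff (R := Rz) (N - m) (c m)
      = ∑ m ∈ Finset.range (N+1),
          (if m ≤ N then PowerSeries.coeff (R := Rz) (N - m) (c m) else 0) :=
    Finset.sum_congr rfl fun m hm =>
      (if_pos (by simpa [Nat.lt_succ_iff] using Finset.mem_range.mp hm)).symm
  have hL2 : ∑ m ∈ Finset.range (N+1),
        (if m ≤ N then PowerSeries.coeff (R := Rz) (N - m) (c m) else 0)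
      = ∑ m ∈ Finset.range (N+1+M),
          (if m ≤ N then PowerSeries.coeff (R := Rz) (N - m) (c m) else 0) := by
    refine Finset.sum_subset (Finset.range_subset_range.mpr (by omega)) fun x _ hx => ?_
    rw [if_neg]
    intro hxN
    exact hx (Finset.mem_range.mpr (by omega))
  have hR1 : ∑ m ∈ Finset.range M, PowerSeries.coeff (R := Rz) N (PowerSeries.X ^ m * c m)
      = ∑ m ∈ Finset.range (N+1+M),
          PowerSeries.coeff (R := Rz) N (PowerSeries.X ^ m * c m) := by
    refine Finset.sum_subset (Finset.range_subset_range.mpr (by omega)) fun x _ hx => ?_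
    have hxM : M ≤ x := by
      by_contra hc
      exact hx (Finset.mem_range.mpr (by omega))
    rw [hM x hxM, mul_zero, map_zero]
  rw [hL1, hL2, hR1]
  exact Finset.sum_congr rfl fun m _ => (PowerSeries.coeff_X_pow_mul' _ _ _).symm

end PSi

section Jacobi

variable {S : Type*} [CommRing S] {ι : Type*} [DecidableEq ι] [Fintype ι]
variable {D : S → S}

lemma D_zero' (hadd : ∀ x y, D (x + y) = D x + D y) : D 0 = 0 := by
  have h := hadd 0 0
  rw [add_zero] at h
  exact ((add_right_inj (D 0)).mp (by rw [← h, add_zero])).symm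

lemma D_sum' (hadd : ∀ x y, D (x + y) = D x + D y)
    {α : Type*} (s : Finset α) (f : α → S) :
    D (∑ i ∈ s, f i) = ∑ i ∈ s, D (f i) := by
  classical
  induction s using Finset.induction_on with
  | empty => simpa using D_zero' hadd
  | insert _ _ hne ih =>
    rw [Finset.sum_insert hne, Finset.sum_insert hne, hadd, ih]

lemma D_one' (hmul : ∀ x y, D (x * y) = D x * y + x * D y) : D 1 = 0 := by
  have h := hmul 1 1
  rw [mul_one, one_mul, mul_one] at h
  exact ((add_right_inj (D 1)).mp (by rw [← h, add_zero])).symm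

lemma D_zsmul' (hadd : ∀ x y, D (x + y) = D x + D y) (u : ℤˣ) (x : S) :
    D (u • x) = u • D x := by
  rcases Int.units_eq_one_or u with h | h <;> subst h
  · simp
  · have hneg : D (-x) = -D x := by
      have h := hadd x (-x)
      rw [add_neg_cancel, D_zero' hadd] at h
      exact eq_neg_of_add_eq_zero_right h.symm
    simpa using hneg

lemma D_prod' (hadd : ∀ x y, D (x + y) = D x + D y)
    (hmul : ∀ x y, D (x * y) = D x * y + x * D y)
    {α : Type*} [DecidableEq α] (s : Finset α) (f : α → S) :
    D (∏ i ∈ s, f i) = ∑ i ∈ s, (∏ j ∈ s.erase i, f j) * D (f i) := by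
  induction s using Finset.induction_on with
  | empty => simpa using D_one' hmul
  | @insert a s hne ih =>
    rw [Finset.prod_insert hne, hmul, ih, Finset.sum_insert hne, Finset.erase_insert hne,
      Finset.mul_sum]
    congr 1
    · rw [mul_comm]
    · refine Finset.sum_congr rfl fun i hi => ?_
      have hia : a ≠ i := fun h => hne (h ▸ hi)
      rw [Finset.erase_insert_of_ne hia, Finset.prod_insert (fun hc => hne (Finset.mem_of_mem_erase hc))]
      ring

lemma D_det' (hadd : ∀ x y, D (x + y) = D x + D y)
    (hmul : ∀ x y, D (x * y) = D x * y + x * D y)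
    (M : Matrix ι ι S) :
    D M.det = ∑ i : ι, ∑ j : ι, M.adjugate i j * D (M j i) := by
  have hcol : ∀ i : ι,
      (M.updateCol i (fun r => D (M r i))).det = ∑ j : ι, M.adjugate i j * D (M j i) := by
    intro i
    rw [← Matrix.cramer_apply, Matrix.cramer_eq_adjugate_mulVec]
    rfl
  rw [Matrix.det_apply, D_sum' hadd]
  have hterm : ∀ σ : Equiv.Perm ι,
      D (Equiv.Perm.sign σ • ∏ i : ι, M (σ i) i)
        = Equiv.Perm.sign σ • ∑ i : ι, (∏ j ∈ Finset.univ.erase i, M (σ j) j) * D (M (σ i) i) := by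
    intro σ
    rw [D_zsmul' hadd, D_prod' hadd hmul]
  rw [Finset.sum_congr rfl fun σ _ => hterm σ]
  have swap : ∑ σ : Equiv.Perm ι, Equiv.Perm.sign σ •
        ∑ i : ι, (∏ j ∈ Finset.univ.erase i, M (σ j) j) * D (M (σ i) i)
      = ∑ i : ι, ∑ σ : Equiv.Perm ι, Equiv.Perm.sign σ •
          ((∏ j ∈ Finset.univ.erase i, M (σ j) j) * D (M (σ i) i)) := by
    rw [Finset.sum_congr rfl fun σ _ => Finset.smul_sum]
    exact Finset.sum_comm
  rw [swap]
  refine Finset.sum_congr rfl fun i _ => ?_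
  rw [← hcol i, Matrix.det_apply]
  refine Finset.sum_congr rfl fun σ _ => ?_
  congr 1
  rw [← Finset.mul_prod_erase Finset.univ _ (Finset.mem_univ i)]
  rw [Matrix.updateCol_apply, if_pos rfl]
  rw [mul_comm]
  congr 1
  refine Finset.prod_congr rfl fun j hj => ?_
  rw [Matrix.updateCol_apply, if_neg (Finset.ne_of_mem_erase hj)]

end Jacobi

section Core

variable {K : Type*} [Field K] [CharZero K] {n : ℕ}

local notation "Rz" => MvPolynomial (Fin n) K
local notation "A" => PowerSeries (MvPolynomial (Fin n) K)

lemma dzs'_eq (j : Fin n) (u : A) : dzs' j u = dzs j u := rfl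

lemma Psi_neg (c : ℕ → A) : Psi (fun m => -(c m)) = - Psi c := by
  refine PowerSeries.ext fun N => ?_
  simp [Finset.sum_neg_distrib]

variable (H : Fin n → MvPolynomial (Fin n) K)

/-- Scaled iterates `bf f m = S_m(f)/m!`. -/
noncomputable def bf (f : Rz) (m : ℕ) : Rz := ((m.factorial : K))⁻¹ • Sop H m f

lemma bf_zero (f : Rz) : bf H f 0 = f := by
  simp [bf, Sop]

lemma bf_rec (f : Rz) (m : ℕ) :
    (m+1) • bf H f (m+1) = ∑ i : Fin n, pderiv i (bf H (H i * f) m) := by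
  have hL : (m+1) • bf H f (m+1) = ((m.factorial : K))⁻¹ • Sop H (m+1) f := by
    rw [bf, ← Nat.cast_smul_eq_nsmul K, smul_smul]
    congr 1
    rw [Nat.factorial_succ, Nat.cast_mul, mul_inv, ← mul_assoc,
      mul_inv_cancel₀ (Nat.cast_ne_zero.mpr (Nat.succ_ne_zero m)), one_mul]
  rw [hL, Sop_succ, Finset.smul_sum]
  exact Finset.sum_congr rfl fun i _ => by rw [bf, Derivation.map_smul]

/-- `Phi f = ∑_m t^m σ_F(S_m(f)/m!)`. -/
noncomputable def Phi (f : Rz) : A := Psi (fun m => sig H (bf H f m))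

/-- `Phid k f = ∑_m t^m σ_F(∂_k(S_m(f)/m!))`. -/
noncomputable def Phid (k : Fin n) (f : Rz) : A :=
  Psi (fun m => sig H (pderiv k (bf H f m)))

/-- The weighted sum `SW j g = ∑_k C(∂_j H_k) · Phid k g`. -/
noncomputable def SW (j : Fin n) (g : Rz) : A :=
  ∑ k : Fin n, PowerSeries.C (R := Rz) (pderiv j (H k)) * Phid H k g

/-- M1 : the `z_j`-derivative of `Phi`. -/
lemma M1 (j : Fin n) (f : Rz) :
    dzs j (Phi H f) = Phid H j f - PowerSeries.X * SW H j f := by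
  rw [Phi, ← dzs'_eq, Psi_dzs]
  have h1 : Psi (fun m => dzs' j (sig H (bf H f m)))
      = Psi (fun m => sig H (pderiv j (bf H f m))
          - PowerSeries.X * ∑ k : Fin n, PowerSeries.C (R := Rz) (pderiv j (H k))
              * sig H (pderiv k (bf H f m))) :=
    Psi_congr fun m => by rw [dzs'_eq, dzs_sig]
  rw [h1, Psi_sub]
  congr 1
  have h2 : Psi (fun m => PowerSeries.X * ∑ k : Fin n, PowerSeries.C (R := Rz) (pderiv j (H k))
      * sig H (pderiv k (bf H f m)))
      = PowerSeries.X * Psi (fun m => ∑ k : Fin n, PowerSeries.C (R := Rz) (pderiv j (H k))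
          * sig H (pderiv k (bf H f m))) := Psi_X_mul _
  rw [h2, Psi_sum]
  congr 1
  exact Finset.sum_congr rfl fun k _ => Psi_C_mul _ _

/-- M2 : the `t`-derivative of `Phi`. -/
lemma M2 (f : Rz) :
    dts (Phi H f) = ∑ i : Fin n, Phid H i (H i * f)
      - ∑ i : Fin n, PowerSeries.C (R := Rz) (H i) * Phid H i f := by
  rw [Phi, Psi_dts]
  have h1 : Psi (fun m => (m+1) • sig H (bf H f (m+1)))
      = ∑ i : Fin n, Phid H i (H i * f) := by
    have e : ∀ m, (m+1) • sig H (bf H f (m+1))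
        = ∑ i : Fin n, sig H (pderiv i (bf H (H i * f) m)) := by
      intro m
      rw [← map_nsmul, bf_rec, map_sum]
    rw [Psi_congr e, Psi_sum]
    rfl
  have h2 : Psi (fun m => dts (sig H (bf H f m)))
      = - ∑ i : Fin n, PowerSeries.C (R := Rz) (H i) * Phid H i f := by
    have e : ∀ m, dts (sig H (bf H f m))
        = ∑ i : Fin n, (- (PowerSeries.C (R := Rz) (H i) * sig H (pderiv i (bf H f m)))) := by
      intro m
      rw [dts_eq_derivative, dt_sig, ← Finset.sum_neg_distrib]
    rw [Psi_congr e, Psi_sum]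
    rw [Finset.sum_congr rfl fun i _ => by
      rw [Psi_neg (fun m => PowerSeries.C (R := Rz) (H i) * sig H (pderiv i (bf H f m))),
        Psi_C_mul]]
    rw [Finset.sum_neg_distrib]
    rfl
  rw [h1, h2, ← sub_eq_add_neg]

/-- The matrix `W` with entries `C(∂_j H_k)`. -/
noncomputable def Wmat : Matrix (Fin n) (Fin n) A :=
  Matrix.of fun j k => PowerSeries.C (R := Rz) (pderiv j (H k))

/-- The matrix `B = 1 - t W`. -/
noncomputable def Bmat : Matrix (Fin n) (Fin n) A :=
  Matrix.of fun j k => (if j = k then (1 : A) else 0)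
    - PowerSeries.X * PowerSeries.C (R := Rz) (pderiv j (H k))

lemma Bmat_apply (j k : Fin n) :
    Bmat H j k = (if j = k then (1 : A) else 0)
      - PowerSeries.X * PowerSeries.C (R := Rz) (pderiv j (H k)) := rfl

/-- `Δ = det B`. -/
noncomputable def Dl : A := (Bmat H).det

lemma dts_Bmat (j k : Fin n) :
    dts (Bmat H j k) = - PowerSeries.C (R := Rz) (pderiv j (H k)) := by
  rw [Bmat_apply, dts_sub, dts_mul, dts_C, dts_X, mul_zero, add_zero, one_mul]
  split_ifs
  · rw [show (1 : A) = PowerSeries.C (R := Rz) 1 from rfl, dts_C, zero_sub]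
  · rw [show (0 : A) = PowerSeries.C (R := Rz) 0 from (map_zero _).symm, dts_C, zero_sub]

lemma constantCoeff_Dl : PowerSeries.constantCoeff (R := Rz) (Dl H) = 1 := by
  rw [Dl, RingHom.map_det, RingHom.mapMatrix_apply]
  have : (Bmat H).map (PowerSeries.constantCoeff (R := Rz)) = 1 := by
    ext j k
    simp only [Matrix.map_apply, Bmat_apply, map_sub, map_mul,
      PowerSeries.constantCoeff_X, zero_mul, sub_zero, Matrix.one_apply]
    split_ifs <;> simp
  rw [this, Matrix.det_one]

end Core

section CongSec

variable {K : Type*} [Field K] [CharZero K] {n : ℕ}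

local notation "Rz" => MvPolynomial (Fin n) K
local notation "A" => PowerSeries (MvPolynomial (Fin n) K)

/-- Congruence modulo `t^N`. -/
def ConG (N : ℕ) (u v : A) : Prop :=
  ∀ r, r < N → PowerSeries.coeff (R := Rz) r u = PowerSeries.coeff (R := Rz) r v

lemma ConG_refl (N : ℕ) (u : A) : ConG N u u := fun _ _ => rfl

lemma ConG_symm {N : ℕ} {u v : A} (h : ConG N u v) : ConG N v u :=
  fun r hr => (h r hr).symm

lemma ConG_trans {N : ℕ} {u v w : A} (h1 : ConG N u v) (h2 : ConG N v w) : ConG N u w :=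
  fun r hr => (h1 r hr).trans (h2 r hr)

lemma ConG_sub {N : ℕ} {u v u' v' : A} (h : ConG N u v) (h' : ConG N u' v') :
    ConG N (u - u') (v - v') := fun r hr => by
  rw [map_sub, map_sub, h r hr, h' r hr]

lemma ConG_sum {N : ℕ} {ι : Type*} (s : Finset ι) (f g : ι → A)
    (h : ∀ i ∈ s, ConG N (f i) (g i)) : ConG N (∑ i ∈ s, f i) (∑ i ∈ s, g i) :=
  fun r hr => by
    rw [map_sum, map_sum]
    exact Finset.sum_congr rfl fun i hi => h i hi r hr

lemma ConG_mul_right {N : ℕ} {u v : A} (w : A) (h : ConG N u v) :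
    ConG N (u * w) (v * w) := by
  intro r hr
  rw [PowerSeries.coeff_mul, PowerSeries.coeff_mul]
  refine Finset.sum_congr rfl fun p hp => ?_
  have hp1 : p.1 + p.2 = r := Finset.HasAntidiagonal.mem_antidiagonal.mp hp
  rw [h p.1 (lt_of_le_of_lt (by omega) hr)]

lemma ConG_mul_left {N : ℕ} {u v : A} (w : A) (h : ConG N u v) :
    ConG N (w * u) (w * v) := by
  rw [mul_comm w u, mul_comm w v]
  exact ConG_mul_right w h

lemma ConG_dzs {N : ℕ} (j : Fin n) {u v : A} (h : ConG N u v) :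
    ConG N (dzs j u) (dzs j v) := fun r hr => by
  rw [coeff_dzs, coeff_dzs, h r hr]

lemma dts_add (u v : A) : dts (u + v) = dts u + dts v := by
  refine PowerSeries.ext fun N => ?_
  simp [smul_add]

variable (H : Fin n → MvPolynomial (Fin n) K)

lemma constantCoeff_sig (a : Rz) : PowerSeries.constantCoeff (R := Rz) (sig H a) = a := by
  have hh : (PowerSeries.constantCoeff (R := Rz)).comp (sig H) = RingHom.id Rz := by
    apply MvPolynomial.ringHom_ext
    · intro k
      simp [sig_C]
    · intro i
      simp [sig_X, Ffam]
  exact RingHom.congr_fun hh a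

set_option maxHeartbeats 2000000 in
theorem keyIdentity (N : ℕ) (f : Rz) :
    PowerSeries.coeff (R := Rz) N (Phi H f * Dl H) = if N = 0 then f else 0 := by
  induction N using Nat.strong_induction_on generalizing f with
  | _ N ih =>
  rcases N with _ | s
  · rw [if_pos rfl, PowerSeries.coeff_zero_eq_constantCoeff, map_mul, constantCoeff_Dl, mul_one]
    rw [← PowerSeries.coeff_zero_eq_constantCoeff]
    rw [Phi, coeff_Psi, Finset.sum_range_one, PowerSeries.coeff_zero_eq_constantCoeff, bf_zero,
      constantCoeff_sig]
  · rw [if_neg (Nat.succ_ne_zero s)]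
    set E := PowerSeries.invOfUnit (Dl H) 1 with hE
    have hDE : Dl H * E = 1 :=
      PowerSeries.mul_invOfUnit _ _ (by rw [constantCoeff_Dl]; rfl)
    have hstep : ∀ g : Rz, ConG (s+1) (Phi H g * Dl H) (PowerSeries.C (R := Rz) g) := by
      intro g r hr
      rw [ih r hr g, PowerSeries.coeff_C]
    have hcancel : ∀ u v : A, ConG (s+1) (u * Dl H) (v * Dl H) → ConG (s+1) u v := by
      intro u v h r hr
      have h2 := ConG_mul_right E h r hr
      rwa [mul_assoc, hDE, mul_one, mul_assoc, hDE, mul_one] at h2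
    have c2 : ∀ i, ConG (s+1) (Phi H (H i * f)) (PowerSeries.C (R := Rz) (H i) * Phi H f) := by
      intro i
      apply hcancel
      refine ConG_trans (hstep (H i * f)) ?_
      intro r hr
      rw [map_mul]
      have h3 := ConG_mul_left (PowerSeries.C (R := Rz) (H i)) (ConG_symm (hstep f)) r hr
      rw [h3, ← mul_assoc]
    set Zm : Fin n → Fin n → A := fun k i =>
      Phid H k (H i * f) - PowerSeries.C (R := Rz) (H i) * Phid H k f with hZm
    have exact1 : ∀ j i, ∑ k : Fin n, Bmat H j k * Zm k i
        = dzs j (Phi H (H i * f)) - PowerSeries.C (R := Rz) (H i) * dzs j (Phi H f) := by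
      intro j i
      rw [M1, M1]
      have hL : ∑ k : Fin n, Bmat H j k * Zm k i
          = Zm j i - ∑ k : Fin n,
              PowerSeries.X * (PowerSeries.C (R := Rz) (pderiv j (H k)) * Zm k i) := by
        rw [Finset.sum_congr rfl fun k _ => by
          rw [Bmat_apply, sub_mul, ite_mul, one_mul, zero_mul, mul_assoc]]
        rw [Finset.sum_sub_distrib, Finset.sum_ite_eq, if_pos (Finset.mem_univ j)]
      rw [hL]
      have hS : ∑ k : Fin n, PowerSeries.X * (PowerSeries.C (R := Rz) (pderiv j (H k)) * Zm k i)
          = PowerSeries.X * SW H j (H i * f)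
            - PowerSeries.C (R := Rz) (H i) * (PowerSeries.X * SW H j f) := by
        rw [Finset.sum_congr rfl fun k _ => by
          rw [show PowerSeries.X * (PowerSeries.C (R := Rz) (pderiv j (H k)) * Zm k i)
            = PowerSeries.X * (PowerSeries.C (R := Rz) (pderiv j (H k)) * Phid H k (H i * f))
              - PowerSeries.C (R := Rz) (H i)
                * (PowerSeries.X * (PowerSeries.C (R := Rz) (pderiv j (H k)) * Phid H k f)) by
            simp only [hZm]; ring]]
        rw [Finset.sum_sub_distrib]
        have hA : ∑ k : Fin n,
            PowerSeries.X * (PowerSeries.C (R := Rz) (pderiv j (H k)) * Phid H k (H i * f))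
            = PowerSeries.X * SW H j (H i * f) := by
          rw [SW, Finset.mul_sum]
        have hB : ∑ k : Fin n, PowerSeries.C (R := Rz) (H i)
              * (PowerSeries.X * (PowerSeries.C (R := Rz) (pderiv j (H k)) * Phid H k f))
            = PowerSeries.C (R := Rz) (H i) * (PowerSeries.X * SW H j f) := by
          rw [SW, Finset.mul_sum, Finset.mul_sum]
        rw [hA, hB]
      rw [hS]
      simp only [hZm]
      ring
    have c4 : ∀ j i, ConG (s+1) (∑ k : Fin n, Bmat H j k * Zm k i)
        (PowerSeries.C (R := Rz) (pderiv j (H i)) * Phi H f) := by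
      intro j i
      have e2 := ConG_dzs j (c2 i)
      have e3 : dzs j (PowerSeries.C (R := Rz) (H i) * Phi H f)
          = PowerSeries.C (R := Rz) (pderiv j (H i)) * Phi H f
            + PowerSeries.C (R := Rz) (H i) * dzs j (Phi H f) := by
        rw [dzs_mul, dzs_C]
      intro r hr
      have h4 := e2 r hr
      rw [e3] at h4
      rw [exact1 j i, map_sub, h4, map_add]
      ring
    have c5 : dts (Phi H f) = ∑ i : Fin n, Zm i i := by
      rw [M2, ← Finset.sum_sub_distrib]
    have hDlZ : ∀ i, Dl H * Zm i i
        = ∑ j : Fin n, (Bmat H).adjugate i j * (∑ k : Fin n, Bmat H j k * Zm k i) := by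
      intro i
      have hadjB : ∀ k, ∑ j : Fin n, (Bmat H).adjugate i j * Bmat H j k
          = if i = k then Dl H else 0 := by
        intro k
        have h5 := congrFun (congrFun (Matrix.adjugate_mul (Bmat H)) i) k
        rw [Matrix.mul_apply] at h5
        rw [h5, Matrix.smul_apply, Matrix.one_apply, smul_eq_mul, mul_ite, mul_one, mul_zero]
        rfl
      have step1 : Dl H * Zm i i
          = ∑ k : Fin n, (if i = k then Dl H else 0) * Zm k i := by
        rw [Finset.sum_congr rfl fun k _ => by rw [ite_mul, zero_mul]]
        rw [Finset.sum_ite_eq, if_pos (Finset.mem_univ i)]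
      rw [step1, Finset.sum_congr rfl fun k _ => by rw [← hadjB k]]
      rw [Finset.sum_congr rfl fun k _ => Finset.sum_mul _ _ (Zm k i), Finset.sum_comm]
      exact Finset.sum_congr rfl fun j _ => by
        rw [Finset.mul_sum]
        exact Finset.sum_congr rfl fun k _ => by ring
    set T : A := ∑ i : Fin n, ∑ j : Fin n,
      (Bmat H).adjugate i j * PowerSeries.C (R := Rz) (pderiv j (H i)) with hT
    have c6 : ConG (s+1) (Dl H * dts (Phi H f)) (T * Phi H f) := by
      have e6 : Dl H * dts (Phi H f)
          = ∑ i : Fin n, ∑ j : Fin n,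
              (Bmat H).adjugate i j * (∑ k : Fin n, Bmat H j k * Zm k i) := by
        rw [c5, Finset.mul_sum]
        exact Finset.sum_congr rfl fun i _ => hDlZ i
      rw [e6, hT, Finset.sum_mul]
      refine ConG_sum _ _ _ fun i _ => ?_
      rw [Finset.sum_mul]
      refine ConG_sum _ _ _ fun j _ => ?_
      intro r hr
      have := ConG_mul_left ((Bmat H).adjugate i j) (c4 j i) r hr
      rw [this, ← mul_assoc]
    have c7 : dts (Dl H) = -T := by
      rw [Dl, D_det' dts_add dts_mul]
      rw [hT, ← Finset.sum_neg_distrib]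
      refine Finset.sum_congr rfl fun i _ => ?_
      rw [← Finset.sum_neg_distrib]
      refine Finset.sum_congr rfl fun j _ => ?_
      rw [dts_Bmat, mul_neg]
    have c8 : ConG (s+1) (dts (Phi H f * Dl H)) 0 := by
      intro r hr
      have e8 : dts (Phi H f * Dl H) = Dl H * dts (Phi H f) + Phi H f * dts (Dl H) := by
        rw [dts_mul]
        ring
      rw [e8, map_add, c6 r hr, c7]
      have : PowerSeries.coeff (R := Rz) r (Phi H f * -T) = - PowerSeries.coeff (R := Rz) r (T * Phi H f) := by
        rw [show Phi H f * -T = -(T * Phi H f) by ring, map_neg]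
      rw [this, map_zero, add_neg_cancel]
    have h0 := c8 s (lt_add_one s)
    rw [coeff_dts, map_zero] at h0
    rw [← Nat.cast_smul_eq_nsmul K] at h0
    rcases smul_eq_zero.mp h0 with hc | hc
    · exact absurd hc (Nat.cast_ne_zero.mpr (Nat.succ_ne_zero s))
    · exact hc

end CongSec

section Final

variable {K : Type*} [Field K] [CharZero K] {n : ℕ}

local notation "Rz" => MvPolynomial (Fin n) K
local notation "A" => PowerSeries (MvPolynomial (Fin n) K)

variable (H : Fin n → MvPolynomial (Fin n) K)

/-- Polynomial (in `t`) version of the substitution family. -/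
noncomputable def Fpoly (i : Fin n) : Polynomial (MvPolynomial (Fin n) K) :=
  Polynomial.C (X i) - Polynomial.X * Polynomial.C (H i)

noncomputable def sigp : MvPolynomial (Fin n) K →+* Polynomial (MvPolynomial (Fin n) K) :=
  eval₂Hom ((Polynomial.C).comp (MvPolynomial.C)) (Fpoly H)

lemma coe_sigp (a : Rz) : ((sigp H a : Polynomial Rz) : A) = sig H a := by
  have hh : (Polynomial.coeToPowerSeries.ringHom).comp (sigp H) = sig H := by
    apply MvPolynomial.ringHom_ext
    · intro k
      simp [sigp, sig_C]
    · intro i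
      simp only [RingHom.comp_apply, sigp, sig_X, coe_eval₂Hom, eval₂_X,
        Polynomial.coeToPowerSeries.ringHom_apply, Fpoly, Ffam]
      push_cast
      rfl
  exact RingHom.congr_fun hh a

noncomputable def BmatP : Matrix (Fin n) (Fin n) (Polynomial (MvPolynomial (Fin n) K)) :=
  Matrix.of fun j k => (if j = k then 1 else 0)
    - Polynomial.X * Polynomial.C (pderiv j (H k))

noncomputable def DlP : Polynomial (MvPolynomial (Fin n) K) := (BmatP H).det

lemma coe_DlP : ((DlP H : Polynomial Rz) : A) = Dl H := by
  rw [DlP, Dl, ← Polynomial.coeToPowerSeries.ringHom_apply, RingHom.map_det,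
    RingHom.mapMatrix_apply]
  congr 1
  ext j k
  simp only [Matrix.map_apply, BmatP, Matrix.of_apply, Bmat_apply]
  rw [map_sub, map_mul, apply_ite (Polynomial.coeToPowerSeries.ringHom (R := Rz)),
    map_one, map_zero]
  simp only [Polynomial.coeToPowerSeries.ringHom_apply, Polynomial.coe_X, Polynomial.coe_C]

lemma DlP_coeff0 : (DlP H).coeff 0 = 1 := by
  have h1 : PowerSeries.coeff (R := Rz) 0 ((DlP H : Polynomial Rz) : A) = (DlP H).coeff 0 := by
    rw [Polynomial.coeff_coe]
  rw [coe_DlP, PowerSeries.coeff_zero_eq_constantCoeff, constantCoeff_Dl] at h1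
  exact h1.symm

end Final

/-- If `Λ^m(P^m) = 0` for all sufficiently large `m`, where `P = ⟨ξ,H⟩`,
then in fact `Λ^m(P^m) = 0` for all `m ≥ 1`. -/
theorem lam_pow_vanish_of_eventually_lam_pow_vanish
    {K : Type*} [Field K] [CharZero K] {n : ℕ}
    (H : Fin n → MvPolynomial (Fin n) K)
    (h : ∃ M : ℕ, ∀ m : ℕ, M ≤ m → (Lam K n ^ m) (PofH H ^ m) = 0) :
    ∀ m : ℕ, 1 ≤ m → (Lam K n ^ m) (PofH H ^ m) = 0 := by
  obtain ⟨M, hM⟩ := h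
  -- translate the hypothesis into vanishing of `Sop`
  have hS0 : ∀ m, M ≤ m → Sop H m 1 = 0 := by
    intro m hm
    have hq := hM m hm
    rw [Lam_pow_PofH'] at hq
    have h1 : (rename (Sum.inr : Fin n → Fin n ⊕ Fin n)) (Sop H m 1) = 0 := by
      rw [← Nat.cast_smul_eq_nsmul K] at hq
      rcases smul_eq_zero.mp hq with hc | hc
      · exact absurd hc (Nat.cast_ne_zero.mpr (Nat.factorial_ne_zero m))
      · exact hc
    have hinj := MvPolynomial.rename_injective (R := K)
      (Sum.inr : Fin n → Fin n ⊕ Fin n) Sum.inr_injective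
    exact hinj (by rw [h1, map_zero])
  -- `Phi 1` is (the image of) a polynomial in `t`
  have hbf0 : ∀ m, M ≤ m → sig H (bf H 1 m) = 0 := fun m hm => by
    rw [bf, hS0 m hm, smul_zero, map_zero]
  have hPhiPoly : Phi H 1
      = ((∑ m ∈ Finset.range M, Polynomial.X ^ m * sigp H (bf H 1 m) :
          Polynomial (MvPolynomial (Fin n) K)) : PowerSeries (MvPolynomial (Fin n) K)) := by
    rw [Phi, Psi_poly M _ hbf0, ← Polynomial.coeToPowerSeries.ringHom_apply, map_sum]
    exact Finset.sum_congr rfl fun m _ => by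
      rw [map_mul, map_pow, Polynomial.coeToPowerSeries.ringHom_apply,
        Polynomial.coeToPowerSeries.ringHom_apply, Polynomial.coe_X, coe_sigp]
  have hPD : Phi H 1 * Dl H = 1 := by
    refine PowerSeries.ext fun N => ?_
    rw [keyIdentity H N 1, PowerSeries.coeff_one]
  -- the polynomial equation and unit argument
  set UP : Polynomial (MvPolynomial (Fin n) K) :=
    ∑ m ∈ Finset.range M, Polynomial.X ^ m * sigp H (bf H 1 m) with hUPdef
  have hUP : ((UP * DlP H : Polynomial (MvPolynomial (Fin n) K))
      : PowerSeries (MvPolynomial (Fin n) K)) = ((1 : Polynomial (MvPolynomial (Fin n) K))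
      : PowerSeries (MvPolynomial (Fin n) K)) := by
    rw [Polynomial.coe_mul, coe_DlP, ← hPhiPoly, hPD, Polynomial.coe_one]
  have hunit : UP * DlP H = 1 := Polynomial.coe_injective _ hUP
  have hDlPunit : IsUnit (DlP H) :=
    IsUnit.of_mul_eq_one (a := DlP H) UP (by rw [mul_comm]; exact hunit)
  obtain ⟨r, _, hrC⟩ := Polynomial.isUnit_iff.mp hDlPunit
  have hr1 : r = 1 := by
    have hco := congrArg (fun p => Polynomial.coeff p 0) hrC
    simpa [DlP_coeff0 H] using hco
  have hDl1 : Dl H = 1 := by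
    rw [← coe_DlP, ← hrC, hr1, Polynomial.coe_C]
    rfl
  have hPhiCoeff : ∀ N, PowerSeries.coeff (R := MvPolynomial (Fin n) K) N (Phi H 1)
      = if N = 0 then 1 else 0 := by
    intro N
    have := keyIdentity H N 1
    rwa [hDl1, mul_one] at this
  -- extract vanishing of all `Sop m 1`, `m ≥ 1`
  have hSall : ∀ m, 1 ≤ m → Sop H m 1 = 0 := by
    intro m
    induction m using Nat.strong_induction_on with
    | _ m ih =>
    intro hm1
    have hco := hPhiCoeff m
    rw [if_neg (by omega), Phi, coeff_Psi] at hco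
    have hterms : ∀ k ∈ Finset.range (m+1), k ≠ m →
        PowerSeries.coeff (R := MvPolynomial (Fin n) K) (m - k) (sig H (bf H 1 k)) = 0 := by
      intro k hk hkm
      rcases Nat.eq_zero_or_pos k with hk0 | hkpos
      · subst hk0
        rw [bf_zero, map_one, PowerSeries.coeff_one, if_neg (by omega)]
      · have hkm' : k < m := by
          have := Finset.mem_range.mp hk
          omega
        rw [bf, ih k hkm' hkpos, smul_zero, map_zero, map_zero]
    rw [Finset.sum_eq_single_of_mem m (Finset.self_mem_range_succ m) hterms,
      Nat.sub_self, PowerSeries.coeff_zero_eq_constantCoeff, constantCoeff_sig] at hco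
    have hfin : Sop H m 1 = (m.factorial : K) • bf H 1 m := by
      rw [bf, smul_smul, mul_inv_cancel₀ (Nat.cast_ne_zero.mpr (Nat.factorial_ne_zero m)),
        one_smul]
    rw [hfin, hco, smul_zero]
  intro m hm
  rw [Lam_pow_PofH', hSall m hm, map_zero, smul_zero]
end

section
/- Let d ≥ 2 and let H = (H_1,...,H_n) be an n-tuple of polynomials in K[z_1,...,z_n] such that each H_i is either zero or homogeneous of degree d. Then det(I_n - JH) = 1 (i.e., the Jacobian determinant of F = z - H is identically 1) if and only if the Jacobian matrix JH is nilpotent. -/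
open MvPolynomial

section Aux

variable {A : Type*} [CommRing A] {τ : Type*}

lemma aux_degree_single (j : τ) : (Finsupp.single j 1 : τ →₀ ℕ).degree = 1 := by
  classical
  simp [Finsupp.degree_apply, Finsupp.support_single_ne_zero j one_ne_zero]

lemma aux_degree_add (a b : τ →₀ ℕ) : (a + b).degree = a.degree + b.degree := by
  simp [Finsupp.degree_eq_weight_one, map_add]

lemma aux_pderiv_isHomogeneous {p : MvPolynomial τ A} {d : ℕ}
    (hp : p.IsHomogeneous d) (j : τ) : (pderiv j p).IsHomogeneous (d - 1) := by
  classical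
  rw [p.as_sum, map_sum]
  apply MvPolynomial.IsHomogeneous.sum
  intro s hs
  rw [pderiv_monomial]
  rcases eq_or_ne (s j) 0 with h | h
  · simp only [h, Nat.cast_zero, mul_zero, map_zero]
    exact isHomogeneous_zero _ _ _
  · apply isHomogeneous_monomial
    have hsd : s.degree = d := by
      have h2 := hp (MvPolynomial.mem_support_iff.mp hs)
      rw [Finsupp.degree_eq_weight_one]; exact h2
    have hle : Finsupp.single j 1 ≤ s :=
      Finsupp.single_le_iff.mpr (Nat.one_le_iff_ne_zero.mpr h)
    have h3 : (s - Finsupp.single j 1) + Finsupp.single j 1 = s := tsub_add_cancel_of_le hle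
    have h5 := congrArg Finsupp.degree h3
    rw [aux_degree_add, aux_degree_single] at h5
    omega

lemma aux_aeval_monomial (s : τ →₀ ℕ) (a : A) :
    aeval (fun i : τ => (Polynomial.C (MvPolynomial.X i : MvPolynomial τ A)) * Polynomial.X)
      (monomial s a)
      = Polynomial.C (monomial s a) * Polynomial.X ^ s.degree := by
  classical
  rw [aeval_monomial, monomial_eq]
  have halg : (algebraMap A (Polynomial (MvPolynomial τ A))) a
      = Polynomial.C (MvPolynomial.C a) := rfl
  rw [halg, Finsupp.prod, Finsupp.prod]
  simp_rw [mul_pow, ← Polynomial.C_pow]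
  rw [Finset.prod_mul_distrib, ← map_prod, Finset.prod_pow_eq_pow_sum]
  rw [map_mul]
  show _ = Polynomial.C (MvPolynomial.C a) * Polynomial.C (∏ i ∈ s.support, MvPolynomial.X i ^ s i)
      * Polynomial.X ^ s.degree
  rw [Finsupp.degree_apply]
  ring

lemma aux_aeval_homog {p : MvPolynomial τ A} {m : ℕ} (hp : p.IsHomogeneous m) :
    aeval (fun i : τ => (Polynomial.C (MvPolynomial.X i : MvPolynomial τ A)) * Polynomial.X) p
      = Polynomial.C p * Polynomial.X ^ m := by
  classical
  have key : ∀ s ∈ p.support,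
      aeval (fun i : τ => (Polynomial.C (MvPolynomial.X i : MvPolynomial τ A)) * Polynomial.X)
        (monomial s (coeff s p))
      = Polynomial.C (monomial s (coeff s p)) * Polynomial.X ^ m := by
    intro s hs
    rw [aux_aeval_monomial]
    congr 2
    have h2 := hp (MvPolynomial.mem_support_iff.mp hs)
    rw [Finsupp.degree_eq_weight_one]; exact h2
  calc aeval (fun i : τ => (Polynomial.C (MvPolynomial.X i : MvPolynomial τ A)) * Polynomial.X) p
      = ∑ s ∈ p.support,
          aeval (fun i : τ => (Polynomial.C (MvPolynomial.X i : MvPolynomial τ A)) * Polynomial.X)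
            (monomial s (coeff s p)) := by
        conv_lhs => rw [p.as_sum]
        rw [map_sum]
    _ = ∑ s ∈ p.support, Polynomial.C (monomial s (coeff s p)) * Polynomial.X ^ m :=
        Finset.sum_congr rfl key
    _ = Polynomial.C p * Polynomial.X ^ m := by
        rw [← Finset.sum_mul, ← map_sum, ← p.as_sum]

end Aux

/-- Let `d ≥ 2` and let `H` be an `n`-tuple of polynomials each of which
is zero or homogeneous of degree `d`. Then `det(I_n - JH) = 1` iff `JH` is nilpotent. -/
theorem det_one_sub_jacMat_eq_one_iff_isNilpotent
    {K : Type*} [Field K] [CharZero K] {n : ℕ}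
    (d : ℕ) (hd : 2 ≤ d)
    (H : Fin n → MvPolynomial (Fin n) K)
    (hH : ∀ i : Fin n, H i = 0 ∨ (H i).IsHomogeneous d) :
    (1 - jacMat H).det = 1 ↔ IsNilpotent (jacMat H) := by
  classical
  set M := jacMat H with hM
  have hentry : ∀ i j, (M i j).IsHomogeneous (d - 1) := by
    intro i j
    rcases hH i with h | h
    · have : M i j = 0 := by simp [hM, jacMat, h]
      rw [this]; exact isHomogeneous_zero _ _ _
    · exact aux_pderiv_isHomogeneous h j
  constructor
  · intro hdet
    -- Apply the scaling substitution z_i ↦ z_i * X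
    have h1 : ((1 - M).map
        (aeval (fun i : Fin n =>
          (Polynomial.C (MvPolynomial.X i : MvPolynomial (Fin n) K)) * Polynomial.X))).det = 1 := by
      rw [← AlgHom.mapMatrix_apply, ← AlgHom.map_det, hdet, map_one]
    have h2 : (1 - M).map
        (aeval (fun i : Fin n =>
          (Polynomial.C (MvPolynomial.X i : MvPolynomial (Fin n) K)) * Polynomial.X))
        = 1 - ((Polynomial.X : Polynomial (MvPolynomial (Fin n) K)) ^ (d - 1)) • (M.map Polynomial.C) := by
      ext i j
      simp only [Matrix.map_apply, Matrix.sub_apply, Matrix.smul_apply, map_sub, smul_eq_mul]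
      rw [aux_aeval_homog (hentry i j)]
      rcases eq_or_ne i j with rfl | hij
      · rw [Matrix.one_apply_eq, map_one, mul_comm, Matrix.one_apply_eq]
      · rw [Matrix.one_apply_ne hij, map_zero, mul_comm, Matrix.one_apply_ne hij]
    have h3 : (1 - ((Polynomial.X : Polynomial (MvPolynomial (Fin n) K)) ^ (d - 1)) • (M.map Polynomial.C))
        = (1 - (Polynomial.X : Polynomial (MvPolynomial (Fin n) K)) • (M.map Polynomial.C)).map
            (Polynomial.aeval (Polynomial.X ^ (d - 1))) := by
      ext i j
      simp only [Matrix.map_apply, Matrix.sub_apply, Matrix.smul_apply, map_sub, smul_eq_mul,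
        map_mul, Polynomial.aeval_X, Polynomial.aeval_C, Polynomial.algebraMap_eq]
      rcases eq_or_ne i j with rfl | hij
      · simp [Matrix.one_apply]
      · simp [Matrix.one_apply, hij]
    have h4 : Polynomial.aeval
        ((Polynomial.X : Polynomial (MvPolynomial (Fin n) K)) ^ (d - 1))
        (Matrix.charpolyRev M) = 1 := by
      simp only [Matrix.charpolyRev]
      rw [AlgHom.map_det, AlgHom.mapMatrix_apply, ← h3, ← h2, h1]
    have hcomp : (Matrix.charpolyRev M).comp
        ((Polynomial.X : Polynomial (MvPolynomial (Fin n) K)) ^ (d - 1)) = 1 := by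
      rw [Polynomial.comp_eq_aeval]
      exact h4
    have hdeg0 : (Matrix.charpolyRev M).natDegree = 0 := by
      have := congrArg Polynomial.natDegree hcomp
      rw [Polynomial.natDegree_comp, Polynomial.natDegree_X_pow, Polynomial.natDegree_one] at this
      have hd1 : d - 1 ≠ 0 := by omega
      exact (Nat.mul_eq_zero.mp this).resolve_right hd1
    have h6 : Matrix.charpolyRev M = 1 := by
      have hc := Polynomial.eq_C_of_natDegree_eq_zero hdeg0
      rw [hc] at h4 ⊢
      rwa [Polynomial.aeval_C, Polynomial.algebraMap_eq] at h4
    have hrev : M.charpoly.reverse = 1 := by rw [Matrix.reverse_charpoly]; exact h6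
    have hdeg : M.charpoly.natDegree = n := by
      rw [Matrix.charpoly_natDegree_eq_dim, Fintype.card_fin]
    have h7 : M.charpoly = Polynomial.X ^ n := by
      have hc : ∀ k ≤ n, M.charpoly.coeff k = (1 : Polynomial (MvPolynomial (Fin n) K)).coeff (n - k) := by
        intro k hk
        rw [← hrev, Polynomial.coeff_reverse, hdeg, Polynomial.revAt_le (Nat.sub_le n k)]
        congr 1; omega
      ext k
      rw [Polynomial.coeff_X_pow]
      rcases le_or_gt k n with hk | hk
      · rw [hc k hk, Polynomial.coeff_one]
        by_cases h : k = n
        · subst h; simp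
        · rw [if_neg (by omega), if_neg (by omega)]
      · rw [Polynomial.coeff_eq_zero_of_natDegree_lt (by rw [hdeg]; exact hk),
          if_neg (by omega)]
    refine ⟨n, ?_⟩
    have hch := M.aeval_self_charpoly
    rwa [h7, map_pow, Polynomial.aeval_X] at hch
  · intro hnil
    have h1 : IsNilpotent (M.charpoly - Polynomial.X ^ n) := by
      have := Matrix.isNilpotent_charpoly_sub_pow_of_isNilpotent hnil
      rwa [Fintype.card_fin] at this
    have h2 : M.charpoly = Polynomial.X ^ n := by
      have := h1.eq_zero
      rwa [sub_eq_zero] at this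
    have hrev : Matrix.charpolyRev M = 1 := by
      rw [← Matrix.reverse_charpoly, h2]
      have hone : (1 : Polynomial (MvPolynomial (Fin n) K)).reverse = 1 := by
        rw [← Polynomial.C_1, Polynomial.reverse_C]
      have := Polynomial.reverse_X_pow_mul (1 : Polynomial (MvPolynomial (Fin n) K)) n
      rw [mul_one, hone] at this
      exact this
    simp only [Matrix.charpolyRev] at hrev
    have h3 : ((1 - (Polynomial.X : Polynomial (MvPolynomial (Fin n) K)) • M.map Polynomial.C).map
        (Polynomial.evalRingHom 1)).det = 1 := by
      rw [← RingHom.mapMatrix_apply, ← RingHom.map_det, hrev, map_one]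
    have h4 : (1 - (Polynomial.X : Polynomial (MvPolynomial (Fin n) K)) • M.map Polynomial.C).map
        (Polynomial.evalRingHom 1) = 1 - M := by
      ext i j
      rcases eq_or_ne i j with rfl | hij
      · simp [Matrix.one_apply]
      · simp [Matrix.one_apply, hij]
    rwa [h4] at h3
end
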